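/- Fix a finite set X with n = |X| ≥ 2. Let u be a CDM parameter on X satisfying Σ_{x∈X} Σ_{y∈X, y≠x} u_{xy} = 0. Define v(z) = −(1/(n−1)) Σ_{x∈X, x≠z} u_{xz} for each z ∈ X, and v(x|{z}) = u_{xz} − (1/(n−1)) Σ_{y∈X, y≠z} u_{yz} for each pair of distinct x, z ∈ X. Then: (i) Σ_{z∈X} v(z) = 0; (ii) Σ_{x∈X, x≠z} v(x|{z}) = 0 for every z ∈ X; and (iii) for every subset C ⊆ X with |C| ≥ 2 and every x ∈ C, exp(v(x) + Σ_{z∈C, z≠x} v(x|{z})) / Σ_{y∈C} exp(v(y) + Σ_{z∈C, z≠y} v(y|{z})) = P_u(x|C). -/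

import Mathlib

/-- The CDM choice probability: `P_u(x|C) = exp(∑_{z∈C, z≠x} u x z) / ∑_{y∈C} exp(∑_{z∈C, z≠y} u y z)`. -/
noncomputable def cdmProb {α : Type*} [DecidableEq α] (u : α → α → ℝ) (C : Finset α) (x : α) : ℝ :=
  Real.exp (∑ z ∈ C.erase x, u x z) / ∑ y ∈ C, Real.exp (∑ z ∈ C.erase y, u y z)

/-- **Validity of the paper's reparameterization of the second-order model `M₂`.**
Let `u` be a CDM parameter with `∑_{x} ∑_{y≠x} u x y = 0`.  Define
`v z = -(1/(n-1)) ∑_{x≠z} u x z` and `w x z = u x z - (1/(n-1)) ∑_{y≠z} u y z`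
(for distinct `x, z`, where `w x z` plays the role of `v(x∣{z})`).  Then
(i) `∑_z v z = 0`, (ii) `∑_{x≠z} w x z = 0` for every `z`, and (iii) the `M₂`
probabilities built from `v` and `w` coincide with the CDM probabilities of `u` on every
choice set of size at least two. -/
theorem cdm_reparameterization_valid {α : Type*} [Fintype α] [DecidableEq α]
    (hn : 2 ≤ Fintype.card α)
    (u : α → α → ℝ)
    (hsum : ∑ x : α, ∑ y ∈ Finset.univ.erase x, u x y = 0)
    (v : α → ℝ)
    (hv : ∀ z : α, v z = -(1 / ((Fintype.card α : ℝ) - 1)) * ∑ x ∈ Finset.univ.erase z, u x z)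
    (w : α → α → ℝ)
    (hw : ∀ x z : α, x ≠ z →
      w x z = u x z - (1 / ((Fintype.card α : ℝ) - 1)) * ∑ y ∈ Finset.univ.erase z, u y z) :
    (∑ z : α, v z = 0) ∧
    (∀ z : α, ∑ x ∈ Finset.univ.erase z, w x z = 0) ∧
    (∀ C : Finset α, 2 ≤ C.card → ∀ x ∈ C,
      Real.exp (v x + ∑ z ∈ C.erase x, w x z) /
        (∑ y ∈ C, Real.exp (v y + ∑ z ∈ C.erase y, w y z)) = cdmProb u C x) := by
  set n : ℝ := (Fintype.card α : ℝ) with hn'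
  set c : ℝ := 1 / (n - 1) with hc'
  have hne : n - 1 ≠ 0 := by
    have : (2:ℝ) ≤ n := by rw [hn']; exact_mod_cast hn
    linarith
  have hc1 : c * (n - 1) = 1 := by rw [hc', one_div, inv_mul_cancel₀ hne]
  set S : α → ℝ := fun z => ∑ x ∈ Finset.univ.erase z, u x z with hS
  have hswap : ∑ z : α, S z = 0 := by
    rw [hS]
    rw [Finset.sum_comm' (s' := fun x => Finset.univ.erase x) (t' := Finset.univ)]
    · exact hsum
    · intro x y; simp [Finset.mem_erase, eq_comm, ne_comm, and_comm]
  have hcard : ∀ z : α, ((Finset.univ.erase z).card : ℝ) = n - 1 := by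
    intro z
    rw [Finset.card_erase_of_mem (Finset.mem_univ z)]
    have : 1 ≤ Fintype.card α := by omega
    push_cast [Finset.card_univ, Nat.cast_sub this]
    ring
  refine ⟨?_, ?_, ?_⟩
  · simp only [hv]
    rw [← Finset.mul_sum, hswap, mul_zero]
  · intro z
    have : ∑ x ∈ Finset.univ.erase z, w x z
        = ∑ x ∈ Finset.univ.erase z, (u x z - c * S z) := by
      apply Finset.sum_congr rfl
      intro x hx
      exact hw x z (Finset.mem_erase.mp hx).1
    rw [this, Finset.sum_sub_distrib, Finset.sum_const, nsmul_eq_mul, hcard z]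
    have : (n - 1) * (c * S z) = S z := by
      rw [← mul_assoc, mul_comm (n-1) c, hc1, one_mul]
    rw [this, hS, sub_self]
  · intro C hC x hx
    have key : ∀ y ∈ C, v y + ∑ z ∈ C.erase y, w y z
        = (∑ z ∈ C.erase y, u y z) - c * ∑ z ∈ C, S z := by
      intro y hy
      have h1 : ∑ z ∈ C.erase y, w y z
          = ∑ z ∈ C.erase y, (u y z - c * S z) := by
        apply Finset.sum_congr rfl
        intro z hz
        exact hw y z (Ne.symm (Finset.mem_erase.mp hz).1)
      rw [h1, Finset.sum_sub_distrib, hv y, ← Finset.mul_sum,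
        ← Finset.add_sum_erase C S hy]
      ring
    have hpos : (0:ℝ) < ∑ y ∈ C, Real.exp (∑ z ∈ C.erase y, u y z) := by
      apply Finset.sum_pos (fun y _ => Real.exp_pos _)
      exact Finset.card_pos.mp (by omega)
    have hden : ∑ y ∈ C, Real.exp (v y + ∑ z ∈ C.erase y, w y z)
        = ∑ y ∈ C, Real.exp ((∑ z ∈ C.erase y, u y z) - c * ∑ z ∈ C, S z) :=
      Finset.sum_congr rfl (fun y hy => by rw [key y hy])
    rw [key x hx, hden]
    simp only [Real.exp_sub]
    rw [← Finset.sum_div, cdmProb, div_div_div_cancel_right₀ (Real.exp_ne_zero _)]
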